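/- Let Ω = [0,1] with Lebesgue measure, 𝒞 = { x ∈ L²(0,1) : x(ω) ≥ 0 a.e. }, and 𝒩 = { x ∈ L²(0,1) : x is a.e. equal to a constant }. Then cone(𝒞 − 𝒩), the cone generated by the set difference 𝒞 − 𝒩, contains L^∞(0,1) but is not all of L²(0,1); in particular, cone(𝒞 − 𝒩) is not a closed linear subspace of L²(0,1), so the Attouch–Brezis qualification condition fails. -/

import Mathlib

open MeasureTheory

/-- With `Ω = [0,1]` and Lebesgue measure, `𝒞` the nonnegative cone in `L²(0,1)` and
`𝒩` the subspace of (a.e.) constant functions, the cone generated by `𝒞 − 𝒩` contains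
every (essentially) bounded element of `L²`, is not all of `L²`, and hence is not a
closed linear subspace of `L²(0,1)`: the Attouch–Brezis qualification condition fails. -/
theorem attouch_brezis_fails_on_L2 :
    let μ : Measure ℝ := volume.restrict (Set.Icc (0 : ℝ) 1)
    let 𝒞 : Set (Lp ℝ 2 μ) := {f | ∀ᵐ ω ∂μ, 0 ≤ f ω}
    let 𝒩 : Set (Lp ℝ 2 μ) := {f | ∃ c : ℝ, ∀ᵐ ω ∂μ, f ω = c}
    let K : Set (Lp ℝ 2 μ) :=
      {g | ∃ t : ℝ, 0 ≤ t ∧ ∃ a ∈ 𝒞, ∃ b ∈ 𝒩, g = t • (a - b)}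
    (∀ f : Lp ℝ 2 μ, (∃ C : ℝ, ∀ᵐ ω ∂μ, |f ω| ≤ C) → f ∈ K) ∧
    (∃ f : Lp ℝ 2 μ, f ∉ K) ∧
    ¬ ∃ S : Submodule ℝ (Lp ℝ 2 μ), IsClosed (S : Set (Lp ℝ 2 μ)) ∧
        (S : Set (Lp ℝ 2 μ)) = K := by
  intro μ 𝒞 𝒩 K
  haveI : IsFiniteMeasure μ := by
    constructor
    simp only [μ, Measure.restrict_apply_univ, Real.volume_Icc]
    norm_num
  -- Part 1: bounded functions are in K
  have hbdd : ∀ f : Lp ℝ 2 μ, (∃ C : ℝ, ∀ᵐ ω ∂μ, |f ω| ≤ C) → f ∈ K := by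
    rintro f ⟨C, hC⟩
    refine ⟨1, zero_le_one, f + Lp.const 2 μ C, ?_, Lp.const 2 μ C,
      ⟨C, (Lp.coeFn_const 2 μ C).mono fun ω hω => hω⟩, ?_⟩
    · filter_upwards [hC, Lp.coeFn_add f (Lp.const 2 μ C), Lp.coeFn_const 2 μ C]
        with ω h1 h2 h3
      rw [h2]
      simp only [Pi.add_apply, h3, Function.const_apply]
      have := abs_le.1 h1
      linarith [this.1]
    · rw [one_smul, add_sub_cancel_right]
  have hexists : ∃ f : Lp ℝ 2 μ, f ∉ K := by
    set g : ℝ → ℝ := fun ω => -(ω ^ (-(1/4) : ℝ)) with hg_def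
    have hgm : AEStronglyMeasurable g μ := by
      apply Measurable.aestronglyMeasurable
      fun_prop
    have hmem : MemLp g 2 μ := by
      rw [memLp_two_iff_integrable_sq hgm]
      have hint : IntegrableOn (fun x : ℝ => x ^ (-(1/2) : ℝ)) (Set.Ioc 0 1) volume := by
        have := intervalIntegral.intervalIntegrable_rpow' (a := 0) (b := 1)
          (r := -(1/2)) (by norm_num)
        rw [intervalIntegrable_iff] at this
        simpa [Set.uIoc_of_le (by norm_num : (0:ℝ) ≤ 1)] using this
      have hint2 : IntegrableOn (fun x : ℝ => x ^ (-(1/2) : ℝ)) (Set.Icc 0 1) volume :=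
        hint.congr_set_ae MeasureTheory.Ioc_ae_eq_Icc.symm
      have : Integrable (fun x : ℝ => x ^ (-(1/2) : ℝ)) μ := hint2
      apply this.congr
      refine (ae_restrict_iff' measurableSet_Icc).2 (ae_of_all _ fun x hx => ?_)
      have hx0 : (0:ℝ) ≤ x := hx.1
      simp only [hg_def, neg_sq]
      rw [← Real.rpow_natCast (x ^ (-(1/4):ℝ)) 2, ← Real.rpow_mul hx0]
      norm_num
    set f0 : Lp ℝ 2 μ := hmem.toLp g with hf0_def
    have hf0 : f0 =ᵐ[μ] g := hmem.coeFn_toLp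
    -- g has no a.e. lower bound
    have hnolb : ∀ m : ℝ, ¬ (∀ᵐ ω ∂μ, m ≤ g ω) := by
      intro m hm
      set M : ℝ := max 1 (-m) with hM_def
      have hM1 : (1:ℝ) ≤ M := le_max_left _ _
      have hM0 : (0:ℝ) < M := lt_of_lt_of_le one_pos hM1
      set δ : ℝ := (M⁻¹) ^ (4:ℕ) with hδ_def
      have hδ0 : (0:ℝ) < δ := pow_pos (inv_pos.2 hM0) 4
      have hδ1 : δ ≤ 1 := by
        apply pow_le_one₀ (le_of_lt (inv_pos.2 hM0))
        rw [inv_le_one_iff₀]; right; exact hM1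
      have hsmall : ∀ ω ∈ Set.Ioo (0:ℝ) δ, g ω < m := by
        intro ω hω
        have hω0 : (0:ℝ) < ω := hω.1
        have h1 : ω ^ ((1:ℝ)/4) < δ ^ ((1:ℝ)/4) :=
          Real.rpow_lt_rpow hω0.le hω.2 (by norm_num)
        have h2 : δ ^ ((1:ℝ)/4) = M⁻¹ := by
          rw [hδ_def, ← Real.rpow_natCast M⁻¹ 4, ← Real.rpow_mul (inv_pos.2 hM0).le]
          norm_num
        have h3 : ω ^ ((1:ℝ)/4) < M⁻¹ := h2 ▸ h1
        have h4 : (0:ℝ) < ω ^ ((1:ℝ)/4) := Real.rpow_pos_of_pos hω0 _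
        have h5 : M < (ω ^ ((1:ℝ)/4))⁻¹ := by
          rw [lt_inv_comm₀ hM0 h4]
          exact h3
        have h6 : g ω = -((ω ^ ((1:ℝ)/4))⁻¹) := by
          simp only [hg_def]
          rw [← Real.rpow_neg_one (ω ^ ((1:ℝ)/4)), ← Real.rpow_mul hω0.le]
          norm_num
        have h7 : -m ≤ M := le_max_right _ _
        rw [h6]; linarith
      have hnull : μ (Set.Ioo 0 δ) = 0 :=
        measure_mono_null (fun ω hω => not_le.2 (hsmall ω hω)) hm
      have : μ (Set.Ioo 0 δ) = ENNReal.ofReal δ := by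
        rw [Measure.restrict_apply measurableSet_Ioo,
          Set.inter_eq_left.2 (Set.Ioo_subset_Icc_self.trans (Set.Icc_subset_Icc_right hδ1)),
          Real.volume_Ioo, sub_zero]
      rw [this] at hnull
      exact absurd hnull (by simp [ENNReal.ofReal_eq_zero, not_le, hδ0])
    refine ⟨f0, ?_⟩
    rintro ⟨t, ht, a, ha, b, ⟨c, hc⟩, hgK⟩
    refine hnolb (-(t * c)) ?_
    filter_upwards [hf0, ha, hc, Lp.coeFn_smul t (a - b), Lp.coeFn_sub a b]
      with ω h1 h2 h3 h4 h5
    have he : g ω = t * (a ω - c) := by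
      rw [← h1, hgK, h4]
      simp only [Pi.smul_apply, smul_eq_mul, h5, Pi.sub_apply, h3]
    rw [he]
    nlinarith [mul_nonneg ht h2]

  refine ⟨hbdd, hexists, ?_⟩
  -- Part 3: no closed submodule equals K
  rintro ⟨S, hScl, hSK⟩
  have hsub : (Set.range ((↑) : Lp.simpleFunc ℝ 2 μ → Lp ℝ 2 μ)) ⊆ (S : Set (Lp ℝ 2 μ)) := by
    rintro _ ⟨s, rfl⟩
    rw [hSK]
    apply hbdd
    obtain ⟨C, hC⟩ := (Lp.simpleFunc.toSimpleFunc s).exists_forall_norm_le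
    refine ⟨C, ?_⟩
    filter_upwards [Lp.simpleFunc.toSimpleFunc_eq_toFun s] with ω hω
    rw [← hω]
    exact hC ω
  have hdense : Dense (S : Set (Lp ℝ 2 μ)) := by
    exact (Lp.simpleFunc.denseRange (E := ℝ) (μ := μ) (p := 2) (by norm_num)).mono hsub
  have huniv : (S : Set (Lp ℝ 2 μ)) = Set.univ := by
    rw [← hScl.closure_eq, hdense.closure_eq]
  obtain ⟨f0, hf0⟩ := hexists
  exact hf0 (hSK ▸ huniv ▸ Set.mem_univ f0)
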